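/- Define, for real x ≥ 1: τ1(x) = (−x² + 16x + 17)/(4·√((2+2x)(x²+8x+7))), τ2(x) = (−x² + 12x + 13)/(4·(x+2)·√(2+2x)), τ3(x) = (−x² + 10x + 11)/√((8x+17)(x²+8x+7)), τ4(x) = (−x² + 9x + 7)/((x+2)·√(8x+17)). Each τ_i is monotonically decreasing on [1, ∞), τ_i(1) = 1 for each i, and consequently τ_i(x) < 1 for every x > 1 and i ∈ {1,2,3,4}. -/

import Mathlib

noncomputable def tau1 (x : ℝ) : ℝ :=
  (-x ^ 2 + 16 * x + 17) / (4 * Real.sqrt ((2 + 2 * x) * (x ^ 2 + 8 * x + 7)))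

noncomputable def tau2 (x : ℝ) : ℝ :=
  (-x ^ 2 + 12 * x + 13) / (4 * (x + 2) * Real.sqrt (2 + 2 * x))

noncomputable def tau3 (x : ℝ) : ℝ :=
  (-x ^ 2 + 10 * x + 11) / Real.sqrt ((8 * x + 17) * (x ^ 2 + 8 * x + 7))

noncomputable def tau4 (x : ℝ) : ℝ :=
  (-x ^ 2 + 9 * x + 7) / ((x + 2) * Real.sqrt (8 * x + 17))

lemma aux_anti (N P N' P' : ℝ → ℝ)
    (hN : ∀ x, HasDerivAt N (N' x) x)
    (hP : ∀ x, HasDerivAt P (P' x) x)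
    (hPpos : ∀ x ∈ Set.Ici (1:ℝ), 0 < P x)
    (hkey : ∀ x, 1 < x → 2 * N' x * P x - N x * P' x < 0) :
    StrictAntiOn (fun x => N x / Real.sqrt (P x)) (Set.Ici 1) := by
  apply strictAntiOn_of_deriv_neg (convex_Ici 1)
  · apply ContinuousOn.div
    · exact fun x _ => ((hN x).continuousAt).continuousWithinAt
    · exact fun x _ =>
        (Real.continuous_sqrt.continuousAt.comp_continuousWithinAt
          ((hP x).continuousAt).continuousWithinAt)
    · intro x hx
      exact ne_of_gt (Real.sqrt_pos.mpr (hPpos x hx))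
  · intro x hx
    rw [interior_Ici] at hx
    have hx1 : (1:ℝ) < x := hx
    have hPx : 0 < P x := hPpos x hx1.le
    have hs : 0 < Real.sqrt (P x) := Real.sqrt_pos.mpr hPx
    have hd : HasDerivAt (fun x => N x / Real.sqrt (P x))
        ((N' x * Real.sqrt (P x) - N x * (P' x / (2 * Real.sqrt (P x)))) /
          (Real.sqrt (P x)) ^ 2) x :=
      (hN x).div ((hP x).sqrt (ne_of_gt hPx)) (ne_of_gt hs)
    rw [hd.deriv]
    apply div_neg_of_neg_of_pos _ (by positivity)
    have hsq : Real.sqrt (P x) ^ 2 = P x := Real.sq_sqrt hPx.le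
    have heq : N' x * Real.sqrt (P x) - N x * (P' x / (2 * Real.sqrt (P x)))
        = (2 * N' x * P x - N x * P' x) / (2 * Real.sqrt (P x)) := by
      field_simp
      linear_combination (2 * N' x) * hsq
    rw [heq]
    exact div_neg_of_neg_of_pos (hkey x hx1) (by positivity)

lemma strictAntiOn_congr {f g : ℝ → ℝ} {s : Set ℝ} (h : StrictAntiOn f s)
    (he : Set.EqOn g f s) : StrictAntiOn g s := by
  intro a ha b hb hab
  rw [he ha, he hb]
  exact h ha hb hab

lemma tau1_anti : StrictAntiOn tau1 (Set.Ici 1) := by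
  have h := aux_anti (fun x => -x ^ 2 + 16 * x + 17)
      (fun x => 16 * ((2 + 2 * x) * (x ^ 2 + 8 * x + 7)))
      (fun x => -(2 * x) + 16)
      (fun x => 16 * (2 * (x ^ 2 + 8 * x + 7) + (2 + 2 * x) * (2 * x + 8)))
      (fun x => by
        simpa using ((hasDerivAt_pow 2 x).neg.add ((hasDerivAt_id x).const_mul 16)).add_const 17)
      (fun x => by
        have h1 : HasDerivAt (fun x : ℝ => 2 + 2 * x) 2 x := by
          simpa using ((hasDerivAt_id x).const_mul 2).const_add 2
        have h2 : HasDerivAt (fun x : ℝ => x ^ 2 + 8 * x + 7) (2 * x + 8) x := by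
          simpa using ((hasDerivAt_pow 2 x).add ((hasDerivAt_id x).const_mul 8)).add_const 7
        simpa [mul_comm, mul_assoc, mul_left_comm] using (h1.mul h2).const_mul 16)
      (fun x hx => by nlinarith [Set.mem_Ici.mp hx])
      (fun x hx => by
        have hy : (0:ℝ) < x - 1 := by linarith
        nlinarith [hy, mul_pos hy hy, mul_pos (mul_pos hy hy) hy, mul_pos (mul_pos (mul_pos hy hy) hy) hy])
  apply strictAntiOn_congr h
  intro x hx
  have hx1 : (1:ℝ) ≤ x := hx
  have hA : (0:ℝ) ≤ (2 + 2 * x) * (x ^ 2 + 8 * x + 7) := by nlinarith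
  show tau1 x = (-x ^ 2 + 16 * x + 17) / Real.sqrt (16 * ((2 + 2 * x) * (x ^ 2 + 8 * x + 7)))
  have hs : Real.sqrt (16 * ((2 + 2 * x) * (x ^ 2 + 8 * x + 7)))
      = 4 * Real.sqrt ((2 + 2 * x) * (x ^ 2 + 8 * x + 7)) := by
    rw [show (16:ℝ) * ((2 + 2 * x) * (x ^ 2 + 8 * x + 7))
        = 4 ^ 2 * ((2 + 2 * x) * (x ^ 2 + 8 * x + 7)) by ring,
      Real.sqrt_mul (by positivity : (0:ℝ) ≤ 4 ^ 2),
      Real.sqrt_sq (by norm_num : (0:ℝ) ≤ 4)]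
  rw [hs]
  rfl

lemma tau2_anti : StrictAntiOn tau2 (Set.Ici 1) := by
  have h := aux_anti (fun x => -x ^ 2 + 12 * x + 13)
      (fun x => 16 * ((x + 2) ^ 2 * (2 + 2 * x)))
      (fun x => -(2 * x) + 12)
      (fun x => 16 * (2 * (x + 2) * (2 + 2 * x) + (x + 2) ^ 2 * 2))
      (fun x => by
        simpa using ((hasDerivAt_pow 2 x).neg.add ((hasDerivAt_id x).const_mul 12)).add_const 13)
      (fun x => by
        have h1 : HasDerivAt (fun x : ℝ => (x + 2) ^ 2) (2 * (x + 2)) x := by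
          simpa using ((hasDerivAt_id x).add_const 2).fun_pow 2
        have h2 : HasDerivAt (fun x : ℝ => 2 + 2 * x) 2 x := by
          simpa using ((hasDerivAt_id x).const_mul 2).const_add 2
        simpa [mul_comm, mul_assoc, mul_left_comm] using (h1.mul h2).const_mul 16)
      (fun x hx => by nlinarith [Set.mem_Ici.mp hx])
      (fun x hx => by
        have hy : (0:ℝ) < x - 1 := by linarith
        nlinarith [hy, mul_pos hy hy, mul_pos (mul_pos hy hy) hy, mul_pos (mul_pos (mul_pos hy hy) hy) hy])
  apply strictAntiOn_congr h
  intro x hx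
  have hx1 : (1:ℝ) ≤ x := hx
  show tau2 x = (-x ^ 2 + 12 * x + 13) / Real.sqrt (16 * ((x + 2) ^ 2 * (2 + 2 * x)))
  have hs : Real.sqrt (16 * ((x + 2) ^ 2 * (2 + 2 * x)))
      = 4 * (x + 2) * Real.sqrt (2 + 2 * x) := by
    rw [show (16:ℝ) * ((x + 2) ^ 2 * (2 + 2 * x))
        = (4 * (x + 2)) ^ 2 * (2 + 2 * x) by ring,
      Real.sqrt_mul (by positivity : (0:ℝ) ≤ (4 * (x + 2)) ^ 2),
      Real.sqrt_sq (by positivity : (0:ℝ) ≤ 4 * (x + 2))]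
  rw [hs]
  rfl

lemma tau3_anti : StrictAntiOn tau3 (Set.Ici 1) := by
  have h := aux_anti (fun x => -x ^ 2 + 10 * x + 11)
      (fun x => (8 * x + 17) * (x ^ 2 + 8 * x + 7))
      (fun x => -(2 * x) + 10)
      (fun x => 8 * (x ^ 2 + 8 * x + 7) + (8 * x + 17) * (2 * x + 8))
      (fun x => by
        simpa using ((hasDerivAt_pow 2 x).neg.add ((hasDerivAt_id x).const_mul 10)).add_const 11)
      (fun x => by
        have h1 : HasDerivAt (fun x : ℝ => 8 * x + 17) 8 x := by
          simpa using ((hasDerivAt_id x).const_mul 8).add_const 17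
        have h2 : HasDerivAt (fun x : ℝ => x ^ 2 + 8 * x + 7) (2 * x + 8) x := by
          simpa using ((hasDerivAt_pow 2 x).add ((hasDerivAt_id x).const_mul 8)).add_const 7
        simpa using h1.fun_mul h2)
      (fun x hx => by nlinarith [Set.mem_Ici.mp hx])
      (fun x hx => by
        have hy : (0:ℝ) < x - 1 := by linarith
        nlinarith [hy, mul_pos hy hy, mul_pos (mul_pos hy hy) hy, mul_pos (mul_pos (mul_pos hy hy) hy) hy])
  exact strictAntiOn_congr h (fun x _ => rfl)

lemma tau4_anti : StrictAntiOn tau4 (Set.Ici 1) := by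
  have h := aux_anti (fun x => -x ^ 2 + 9 * x + 7)
      (fun x => (x + 2) ^ 2 * (8 * x + 17))
      (fun x => -(2 * x) + 9)
      (fun x => 2 * (x + 2) * (8 * x + 17) + (x + 2) ^ 2 * 8)
      (fun x => by
        simpa using ((hasDerivAt_pow 2 x).neg.add ((hasDerivAt_id x).const_mul 9)).add_const 7)
      (fun x => by
        have h1 : HasDerivAt (fun x : ℝ => (x + 2) ^ 2) (2 * (x + 2)) x := by
          simpa using ((hasDerivAt_id x).add_const 2).fun_pow 2
        have h2 : HasDerivAt (fun x : ℝ => 8 * x + 17) 8 x := by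
          simpa using ((hasDerivAt_id x).const_mul 8).add_const 17
        simpa using h1.fun_mul h2)
      (fun x hx => by nlinarith [Set.mem_Ici.mp hx])
      (fun x hx => by
        have hy : (0:ℝ) < x - 1 := by linarith
        nlinarith [hy, mul_pos hy hy, mul_pos (mul_pos hy hy) hy, mul_pos (mul_pos (mul_pos hy hy) hy) hy])
  apply strictAntiOn_congr h
  intro x hx
  have hx1 : (1:ℝ) ≤ x := hx
  show tau4 x = (-x ^ 2 + 9 * x + 7) / Real.sqrt ((x + 2) ^ 2 * (8 * x + 17))
  have hs : Real.sqrt ((x + 2) ^ 2 * (8 * x + 17))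
      = (x + 2) * Real.sqrt (8 * x + 17) := by
    rw [Real.sqrt_mul (by positivity : (0:ℝ) ≤ (x + 2) ^ 2),
      Real.sqrt_sq (by positivity : (0:ℝ) ≤ x + 2)]
  rw [hs]
  rfl

lemma tau1_one : tau1 1 = 1 := by
  unfold tau1
  rw [show ((2:ℝ) + 2 * 1) * (1 ^ 2 + 8 * 1 + 7) = 8 ^ 2 by norm_num,
    Real.sqrt_sq (by norm_num : (0:ℝ) ≤ 8)]
  norm_num

lemma tau2_one : tau2 1 = 1 := by
  unfold tau2
  rw [show (2:ℝ) + 2 * 1 = 2 ^ 2 by norm_num,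
    Real.sqrt_sq (by norm_num : (0:ℝ) ≤ 2)]
  norm_num

lemma tau3_one : tau3 1 = 1 := by
  unfold tau3
  rw [show ((8:ℝ) * 1 + 17) * (1 ^ 2 + 8 * 1 + 7) = 20 ^ 2 by norm_num,
    Real.sqrt_sq (by norm_num : (0:ℝ) ≤ 20)]
  norm_num

lemma tau4_one : tau4 1 = 1 := by
  unfold tau4
  rw [show (8:ℝ) * 1 + 17 = 5 ^ 2 by norm_num,
    Real.sqrt_sq (by norm_num : (0:ℝ) ≤ 5)]
  norm_num

/-- each τ_i is monotonically decreasing on [1,∞), equals 1 at x = 1,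
and consequently τ_i(x) < 1 for every x > 1. -/
theorem stmt_15 :
    (StrictAntiOn tau1 (Set.Ici 1) ∧ StrictAntiOn tau2 (Set.Ici 1) ∧
     StrictAntiOn tau3 (Set.Ici 1) ∧ StrictAntiOn tau4 (Set.Ici 1)) ∧
    (tau1 1 = 1 ∧ tau2 1 = 1 ∧ tau3 1 = 1 ∧ tau4 1 = 1) ∧
    (∀ x : ℝ, 1 < x → tau1 x < 1 ∧ tau2 x < 1 ∧ tau3 x < 1 ∧ tau4 x < 1) := by
  refine ⟨⟨tau1_anti, tau2_anti, tau3_anti, tau4_anti⟩,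
    ⟨tau1_one, tau2_one, tau3_one, tau4_one⟩, ?_⟩
  intro x hx
  have h1 : (1:ℝ) ∈ Set.Ici (1:ℝ) := Set.mem_Ici.mpr le_rfl
  have hxm : x ∈ Set.Ici (1:ℝ) := Set.mem_Ici.mpr hx.le
  exact ⟨tau1_one ▸ tau1_anti h1 hxm hx, tau2_one ▸ tau2_anti h1 hxm hx,
    tau3_one ▸ tau3_anti h1 hxm hx, tau4_one ▸ tau4_anti h1 hxm hx⟩
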